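/- Consider the linear ODE system w'(t) = Φ u(t), u'(t) = −K w(t) − (f/Φ) A u(t) on ℝⁿ × ℝⁿ, where Φ > 0, K is symmetric, and A is skew-symmetric. Then the energy H(u,w) = ½ Φ uᵀu + ½ wᵀ K w is constant along every differentiable solution. -/

import Mathlib

open Matrix

lemma hasDerivAt_dotProduct' {n : ℕ} {u v : ℝ → (Fin n → ℝ)} {u' v' : Fin n → ℝ} {t : ℝ}
    (hu : ∀ i, HasDerivAt (fun s => u s i) (u' i) t)
    (hv : ∀ i, HasDerivAt (fun s => v s i) (v' i) t) :
    HasDerivAt (fun s => u s ⬝ᵥ v s) (u' ⬝ᵥ v t + u t ⬝ᵥ v') t := by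
  simp only [dotProduct]
  rw [← Finset.sum_add_distrib]
  exact HasDerivAt.fun_sum fun i _ => (hu i).mul (hv i)

theorem hdg_energy_conserved {n : ℕ} (K A : Matrix (Fin n) (Fin n) ℝ)
    (hK : K.transpose = K) (hA : A.transpose = -A) (Φ f : ℝ) (hΦ : 0 < Φ)
    (u w : ℝ → EuclideanSpace ℝ (Fin n))
    (hw : ∀ t : ℝ, HasDerivAt w (Φ • u t) t)
    (hu : ∀ t : ℝ, HasDerivAt u ((WithLp.toLp 2 (-(K.mulVec (w t))) : EuclideanSpace ℝ (Fin n)) - (f / Φ) • (WithLp.toLp 2 (A.mulVec (u t)) : EuclideanSpace ℝ (Fin n))) t) :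
    ∀ t : ℝ,
      (1 / 2 : ℝ) * Φ * (u t ⬝ᵥ u t) + (1 / 2 : ℝ) * (w t ⬝ᵥ K.mulVec (w t))
        = (1 / 2 : ℝ) * Φ * (u 0 ⬝ᵥ u 0) + (1 / 2 : ℝ) * (w 0 ⬝ᵥ K.mulVec (w 0)) := by
  set g : ℝ → ℝ := fun t =>
    (1 / 2 : ℝ) * Φ * (u t ⬝ᵥ u t) + (1 / 2 : ℝ) * (w t ⬝ᵥ K.mulVec (w t)) with hgdef
  have key : ∀ t, HasDerivAt g 0 t := by
    intro t
    set u' : Fin n → ℝ := fun i =>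
      (-(K.mulVec (w t)) - (f / Φ) • (A.mulVec (u t)) : Fin n → ℝ) i with hu'def
    set w' : Fin n → ℝ := fun i => Φ * u t i with hw'def
    have hui : ∀ i, HasDerivAt (fun s => u s i) (u' i) t := by
      intro i
      have := (EuclideanSpace.proj i (𝕜 := ℝ)).hasFDerivAt.comp_hasDerivAt t (hu t)
      simp [hu'def] at this; exact this
    have hwi : ∀ i, HasDerivAt (fun s => w s i) (w' i) t := by
      intro i
      have := (EuclideanSpace.proj i (𝕜 := ℝ)).hasFDerivAt.comp_hasDerivAt t (hw t)
      simp [hw'def] at this; exact this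
    have hKwi : ∀ i, HasDerivAt (fun s => K.mulVec (w s) i) (K.mulVec w' i) t := by
      intro i
      simp only [Matrix.mulVec, dotProduct]
      exact HasDerivAt.fun_sum fun j _ => (hwi j).const_mul (K i j)
    have h1 : HasDerivAt (fun s => (u s : Fin n → ℝ) ⬝ᵥ u s)
        (u' ⬝ᵥ (u t : Fin n → ℝ) + (u t : Fin n → ℝ) ⬝ᵥ u') t :=
      hasDerivAt_dotProduct' hui hui
    have h2 : HasDerivAt (fun s => (w s : Fin n → ℝ) ⬝ᵥ K.mulVec (w s))
        (w' ⬝ᵥ K.mulVec (w t) + (w t : Fin n → ℝ) ⬝ᵥ K.mulVec w') t :=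
      hasDerivAt_dotProduct' hwi hKwi
    have hD : HasDerivAt g
        ((1 / 2 : ℝ) * Φ * (u' ⬝ᵥ (u t : Fin n → ℝ) + (u t : Fin n → ℝ) ⬝ᵥ u')
          + (1 / 2 : ℝ) * (w' ⬝ᵥ K.mulVec (w t) + (w t : Fin n → ℝ) ⬝ᵥ K.mulVec w')) t := by
      have := ((h1.const_mul ((1 / 2 : ℝ) * Φ)).add (h2.const_mul (1 / 2 : ℝ)))
      simp [hgdef, mul_assoc] at this ⊢; exact this
    have hzero :
        (1 / 2 : ℝ) * Φ * (u' ⬝ᵥ (u t : Fin n → ℝ) + (u t : Fin n → ℝ) ⬝ᵥ u')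
          + (1 / 2 : ℝ) * (w' ⬝ᵥ K.mulVec (w t) + (w t : Fin n → ℝ) ⬝ᵥ K.mulVec w') = 0 := by
      have hue : u' = -(K.mulVec (w t)) - (f / Φ) • (A.mulVec (u t)) := by
        funext i; simp [hu'def]
      have hKuw : (w t : Fin n → ℝ) ⬝ᵥ K.mulVec (u t) = (u t : Fin n → ℝ) ⬝ᵥ K.mulVec (w t) := by
        rw [Matrix.dotProduct_mulVec, ← Matrix.mulVec_transpose, hK, dotProduct_comm]
      have hskew : (u t : Fin n → ℝ) ⬝ᵥ A.mulVec (u t) = 0 := by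
        have h := congrArg (fun M => (u t : Fin n → ℝ) ⬝ᵥ Matrix.mulVec M (u t)) hA
        simp only [Matrix.neg_mulVec, dotProduct_neg] at h
        have h2 : (u t : Fin n → ℝ) ⬝ᵥ Aᵀ.mulVec (u t)
            = (u t : Fin n → ℝ) ⬝ᵥ A.mulVec (u t) := by
          rw [Matrix.mulVec_transpose, Matrix.dotProduct_mulVec, dotProduct_comm]
        rw [h2] at h
        linarith
      have hskew' : A.mulVec (u t) ⬝ᵥ (u t : Fin n → ℝ) = 0 := by
        rw [dotProduct_comm]; exact hskew
      have e1 : w' ⬝ᵥ K.mulVec (w t) = Φ * ((u t : Fin n → ℝ) ⬝ᵥ K.mulVec (w t)) := by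
        simp [hw'def, dotProduct, Finset.mul_sum, mul_assoc]
      have e2 : (w t : Fin n → ℝ) ⬝ᵥ K.mulVec w' = Φ * ((u t : Fin n → ℝ) ⬝ᵥ K.mulVec (w t)) := by
        rw [← hKuw]
        simp [hw'def, dotProduct, Matrix.mulVec, Finset.mul_sum, mul_comm, mul_assoc,
          mul_left_comm]
      rw [hue, e1, e2]
      simp only [sub_dotProduct, neg_dotProduct, smul_dotProduct,
        dotProduct_sub, dotProduct_neg, dotProduct_smul,
        dotProduct_comm (K.mulVec (w t)) (u t : Fin n → ℝ),
        hskew, hskew', smul_eq_mul]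
      ring
    rw [← hzero]
    exact hD
  have hconst : ∀ t, g t = g 0 := fun t =>
    is_const_of_deriv_eq_zero (fun s => (key s).differentiableAt)
      (fun s => (key s).deriv) t 0
  intro t
  exact hconst t
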